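/- Let n ≥ 1 and k ≥ 2 be integers, and let T(n,k) be the graph on vertex set {1, 2, …, n} in which distinct vertices a and b are adjacent if and only if a ≢ b (mod k). Then the cutwidth of T(n,k) satisfies cw(T(n,k)) ≤ ((k−1)/k)·n²/4 + n/2 + k/(4(k−1)). -/

import Mathlib

open Finset

variable {V : Type*}

/-- The number of edges crossing position `i` in the linear ordering `f`. -/
def SimpleGraph.cutAt [Fintype V] [DecidableEq V] (G : SimpleGraph V) [DecidableRel G.Adj]
    (f : V ≃ Fin (Fintype.card V)) (i : Fin (Fintype.card V)) : ℕ :=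
  (G.edgeFinset.filter (fun e => ∃ u ∈ e, ∃ v ∈ e, f u ≤ i ∧ i < f v)).card

/-- The cutwidth of a finite simple graph. -/
noncomputable def SimpleGraph.cutwidth [Fintype V] [DecidableEq V] (G : SimpleGraph V)
    [DecidableRel G.Adj] : ℕ :=
  sInf { m | ∃ f : V ≃ Fin (Fintype.card V), m = Finset.univ.sup (fun i => G.cutAt f i) }

/-- The degeneracy of a finite simple graph. -/
noncomputable def SimpleGraph.degeneracy [Fintype V] [DecidableEq V] (G : SimpleGraph V)
    [DecidableRel G.Adj] : ℕ :=
  sSup { k | ∃ s : Finset V, s.Nonempty ∧ ∀ v ∈ s, k ≤ (s.filter (G.Adj v)).card }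

/-- Number of edges of the induced subgraph on `s`. -/
def SimpleGraph.inducedEdgeCount [Fintype V] [DecidableEq V] (G : SimpleGraph V)
    [DecidableRel G.Adj] (s : Finset V) : ℕ :=
  (G.edgeFinset.filter (fun e => ∀ u ∈ e, u ∈ s)).card

/-- `(ρ, λ)`-uniform sparsity. -/
def SimpleGraph.UniformlySparse [Fintype V] [DecidableEq V] (G : SimpleGraph V)
    [DecidableRel G.Adj] (ρ lam : ℝ) : Prop :=
  ∀ s : Finset V, ρ * (Fintype.card V : ℝ) ≤ (s.card : ℝ) →
    (G.inducedEdgeCount s : ℝ) ≤ (s.card : ℝ) * ((s.card : ℝ) - 1) / (2 * lam)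

/-- The graph on `{1,…,n}` (realized as `Fin n`, vertex `j : Fin n` standing for `j+1`) where
distinct `a`, `b` are adjacent iff `a ≢ b (mod k)`; note `a ≢ b (mod k) ↔ a−1 ≢ b−1 (mod k)`,
so taking residues of the `Fin`-values is equivalent. It is isomorphic to the Turán graph. -/
def turanMod (n k : ℕ) : SimpleGraph (Fin n) where
  Adj a b := (a : ℕ) % k ≠ (b : ℕ) % k
  symm := ⟨fun a b h => h.symm⟩
  loopless := ⟨fun a h => h rfl⟩

instance (n k : ℕ) : DecidableRel (turanMod n k).Adj :=
  fun a b => inferInstanceAs (Decidable ((a : ℕ) % k ≠ (b : ℕ) % k))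

section Aux


lemma mod_count_Ico_bounds (a r k j q' s' : ℕ) (hk : 0 < k) (hj : j < k)
    (hr : r = k * q' + s') (hs' : s' < k) :
    q' ≤ ((Ico a (a+r)).filter (fun x => x % k = j)).card ∧
    ((Ico a (a+r)).filter (fun x => x % k = j)).card ≤ q' + 1 := by
  have hfe : (Ico a (a+r)).filter (fun x => x % k = j)
      = (Ico a (a+r)).filter (· ≡ j [MOD k]) := by
    apply filter_congr
    intro x _
    simp [Nat.ModEq, Nat.mod_eq_of_lt hj]
  have hc := Nat.Ico_filter_modEq_card a (a+r) hk j
  rw [hfe]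
  have hk0 : (0:ℚ) < (k:ℚ) := by exact_mod_cast hk
  have hs'k : (s':ℚ) < (k:ℚ) := by exact_mod_cast hs'
  have hs'0 : (0:ℚ) ≤ (s':ℚ) := by positivity
  have hxsplit : (((a+r:ℕ):ℚ) - (j:ℚ)) / (k:ℚ)
      = ((a:ℚ) - (j:ℚ) + (s':ℚ)) / (k:ℚ) + ((q':ℤ):ℚ) := by
    subst hr
    push_cast
    field_simp
    ring
  rw [hxsplit, Int.ceil_add_intCast] at hc
  have h1 : ⌈((a:ℚ) - (j:ℚ)) / (k:ℚ)⌉ ≤ ⌈((a:ℚ) - (j:ℚ) + (s':ℚ)) / (k:ℚ)⌉ := by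
    apply Int.ceil_le_ceil
    gcongr
    linarith
  have h2 : ⌈((a:ℚ) - (j:ℚ) + (s':ℚ)) / (k:ℚ)⌉ ≤ ⌈((a:ℚ) - (j:ℚ)) / (k:ℚ)⌉ + 1 := by
    rw [Int.ceil_le]
    push_cast
    rw [div_le_iff₀ hk0]
    have := Int.le_ceil (((a:ℚ) - (j:ℚ)) / (k:ℚ))
    rw [div_le_iff₀ hk0] at this
    nlinarith [this]
  have hlow : (q':ℤ) ≤ (((Ico a (a+r)).filter (· ≡ j [MOD k])).card : ℤ) := by
    rw [hc]; omega
  have hhigh : (((Ico a (a+r)).filter (· ≡ j [MOD k])).card : ℤ) ≤ (q':ℤ) + 1 := by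
    rw [hc]; omega
  constructor
  · exact_mod_cast hlow
  · exact_mod_cast hhigh

lemma sum_filter_mod_card (s : Finset ℕ) (k : ℕ) (hk : 0 < k) :
    ∑ j ∈ range k, (s.filter (fun x => x % k = j)).card = s.card :=
  (card_eq_sum_card_fiberwise (fun x _ => mem_range.2 (Nat.mod_lt x hk))).symm

lemma peq_card_eq_sum (m n k : ℕ) (hk : 0 < k) :
    (((range m) ×ˢ (Ico m n)).filter (fun p : ℕ×ℕ => p.1 % k = p.2 % k)).card
      = ∑ j ∈ range k, ((range m).filter (fun x => x % k = j)).card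
          * ((Ico m n).filter (fun x => x % k = j)).card := by
  rw [card_eq_sum_card_fiberwise (f := fun p : ℕ×ℕ => p.1 % k) (t := range k)
    (fun p _ => mem_range.2 (Nat.mod_lt _ hk))]
  apply sum_congr rfl
  intro j hj
  rw [← card_product]
  congr 1
  ext ⟨a, b⟩
  simp only [mem_filter, mem_product, mem_range, mem_Ico]
  constructor
  · rintro ⟨⟨⟨ha, hb⟩, hab⟩, haj⟩
    exact ⟨⟨ha, haj⟩, hb, by omega⟩
  · rintro ⟨⟨ha, haj⟩, hb, hbj⟩
    exact ⟨⟨⟨ha, hb⟩, by omega⟩, haj⟩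


lemma sum_mul_ge (k : ℕ) (α β : ℝ) (lA lB : ℕ → ℕ)
    (h : ∀ j ∈ Finset.range k, 0 ≤ ((lA j : ℝ) - α) * ((lB j : ℝ) - β)) :
    β * ∑ j ∈ range k, (lA j : ℝ) + α * ∑ j ∈ range k, (lB j : ℝ) - (k:ℝ) * α * β
      ≤ ∑ j ∈ range k, (lA j : ℝ) * (lB j : ℝ) := by
  have hle : ∑ j ∈ range k, (β * (lA j : ℝ) + α * (lB j : ℝ) - α * β)
      ≤ ∑ j ∈ range k, (lA j : ℝ) * (lB j : ℝ) := by
    apply Finset.sum_le_sum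
    intro j hj
    nlinarith [h j hj]
  calc β * ∑ j ∈ range k, (lA j : ℝ) + α * ∑ j ∈ range k, (lB j : ℝ) - (k:ℝ) * α * β
      = ∑ j ∈ range k, (β * (lA j : ℝ) + α * (lB j : ℝ) - α * β) := by
        rw [Finset.sum_sub_distrib, Finset.sum_add_distrib, ← Finset.mul_sum, ← Finset.mul_sum,
          Finset.sum_const, card_range, nsmul_eq_mul]
        ring
    _ ≤ _ := hle


lemma rhs_scale (k n X : ℝ) (hk : 0 < k)
    (h : X * k ≤ (k - 1) * n ^ 2 / 4 + k * n / 2) :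
    X ≤ (k - 1) / k * n ^ 2 / 4 + n / 2 := by
  rw [← mul_le_mul_iff_of_pos_right hk]
  calc X * k ≤ (k - 1) * n ^ 2 / 4 + k * n / 2 := h
    _ = ((k - 1) / k * n ^ 2 / 4 + n / 2) * k := by field_simp

lemma poly_case1 (k m r n s s' : ℝ) (hk1 : 1 ≤ k - 1) (hnr : n = m + r)
    (hs0 : 0 ≤ s) (hs'0 : 0 ≤ s') (hcase : s + s' ≤ k) (hssn : s + s' ≤ n) :
    (k - 1) * (m * r) + s * s' ≤ (k - 1) * n ^ 2 / 4 + k * n / 2 := by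
  have e2 : 4 * s * s' ≤ (s + s') ^ 2 := by nlinarith [sq_nonneg (s - s')]
  have e1 : (s + s') ^ 2 ≤ k * n := by nlinarith
  have e3 : (k - 1) * (m * r) * 4 ≤ (k - 1) * n ^ 2 := by
    rw [hnr]
    nlinarith [mul_nonneg (by linarith : (0:ℝ) ≤ k - 1) (sq_nonneg (m - r))]
  nlinarith

lemma poly_case2 (k m r n s s' : ℝ) (hk1 : 1 ≤ k - 1) (hnr : n = m + r)
    (hsk : s < k) (hs'k : s' < k) (hcase : k < s + s') (hssn : s + s' ≤ n) :
    (k - 1) * (m * r) + (k - s) * (k - s') ≤ (k - 1) * n ^ 2 / 4 + k * n / 2 := by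
  have hkn : k ≤ n := by linarith
  have e2 : 4 * ((k - s) * (k - s')) ≤ ((k - s) + (k - s')) ^ 2 := by
    nlinarith [sq_nonneg (s - s')]
  have e1 : ((k - s) + (k - s')) ^ 2 ≤ k * k := by nlinarith
  have e3 : (k - 1) * (m * r) * 4 ≤ (k - 1) * n ^ 2 := by
    rw [hnr]
    nlinarith [mul_nonneg (by linarith : (0:ℝ) ≤ k - 1) (sq_nonneg (m - r))]
  nlinarith

lemma real_final (n k m r q s q' s' : ℕ) (S : ℝ) (hk : 2 ≤ k)
    (hnr : n = m + r) (hmqs : m = k * q + s) (hsk : s < k)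
    (hrqs : r = k * q' + s') (hs'k : s' < k)
    (hS1 : (q':ℝ) * m + (q:ℝ) * r - (k:ℝ) * q * q' ≤ S)
    (hS2 : ((q':ℝ) + 1) * m + ((q:ℝ) + 1) * r - (k:ℝ) * ((q:ℝ) + 1) * ((q':ℝ) + 1) ≤ S) :
    (m:ℝ) * r - S ≤ ((k:ℝ) - 1) / (k:ℝ) * (n:ℝ) ^ 2 / 4 + (n:ℝ) / 2 := by
  have hk1R : (1:ℝ) ≤ (k:ℝ) - 1 := by
    have : (2:ℝ) ≤ (k:ℝ) := by exact_mod_cast hk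
    linarith
  have hkR : (0:ℝ) < (k:ℝ) := by linarith
  have hmqsR : (m:ℝ) = k * q + s := by exact_mod_cast hmqs
  have hrqsR : (r:ℝ) = k * q' + s' := by exact_mod_cast hrqs
  have hnrR : (n:ℝ) = m + r := by exact_mod_cast hnr
  have hskR : (s:ℝ) < k := by exact_mod_cast hsk
  have hs'kR : (s':ℝ) < k := by exact_mod_cast hs'k
  have hq0 : (0:ℝ) ≤ q := Nat.cast_nonneg q
  have hq'0 : (0:ℝ) ≤ q' := Nat.cast_nonneg q'
  have hs0 : (0:ℝ) ≤ s := Nat.cast_nonneg s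
  have hs'0 : (0:ℝ) ≤ s' := Nat.cast_nonneg s'
  have hssn : (s:ℝ) + s' ≤ n := by
    have h1 : (s:ℝ) ≤ m := by rw [hmqsR]; nlinarith
    have h2 : (s':ℝ) ≤ r := by rw [hrqsR]; nlinarith
    rw [hnrR]; linarith
  -- upper bounds with division, from hS1 and hS2
  have hU1 : (m:ℝ) * r - S ≤ (((k:ℝ) - 1) * ((m:ℝ) * r) + (s:ℝ) * s') / k := by
    rw [le_div_iff₀ hkR]
    have h := mul_le_mul_of_nonneg_left hS1 (le_of_lt hkR)
    have hbase : (k:ℝ) * ((q':ℝ) * m + (q:ℝ) * r - (k:ℝ) * q * q')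
        = (m:ℝ) * r - (s:ℝ) * s' := by rw [hmqsR, hrqsR]; ring
    rw [hbase] at h
    nlinarith [h]
  have hU2 : (m:ℝ) * r - S
      ≤ (((k:ℝ) - 1) * ((m:ℝ) * r) + ((k:ℝ) - s) * ((k:ℝ) - s')) / k := by
    rw [le_div_iff₀ hkR]
    have h := mul_le_mul_of_nonneg_left hS2 (le_of_lt hkR)
    have hbase : (k:ℝ) * (((q':ℝ) + 1) * m + ((q:ℝ) + 1) * r
          - (k:ℝ) * ((q:ℝ) + 1) * ((q':ℝ) + 1))
        = (m:ℝ) * r - (s:ℝ) * s' + (k:ℝ) * (s + s') - (k:ℝ) * k := by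
      rw [hmqsR, hrqsR]; ring
    rw [hbase] at h
    nlinarith [h]
  clear hS1 hS2 hmqsR hrqsR hmqs hrqs
  by_cases hcase : (s:ℝ) + s' ≤ k
  · refine hU1.trans (rhs_scale _ _ _ hkR ?_)
    rw [div_mul_cancel₀ _ (ne_of_gt hkR)]
    exact poly_case1 _ _ _ _ _ _ hk1R hnrR hs0 hs'0 hcase hssn
  · push_neg at hcase
    refine hU2.trans (rhs_scale _ _ _ hkR ?_)
    rw [div_mul_cancel₀ _ (ne_of_gt hkR)]
    exact poly_case2 _ _ _ _ _ _ hk1R hnrR hskR hs'kR hcase hssn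

lemma crossing_bound (n k m : ℕ) (hk : 2 ≤ k) (hm2 : m ≤ n) :
    ((((range m) ×ˢ (Ico m n)).filter (fun p : ℕ×ℕ => p.1 % k ≠ p.2 % k)).card : ℝ)
      ≤ ((k:ℝ) - 1) / (k:ℝ) * (n:ℝ) ^ 2 / 4 + (n:ℝ) / 2 := by
  classical
  have hk0 : 0 < k := by omega
  obtain ⟨r, hnr⟩ : ∃ r, n = m + r := ⟨n - m, by omega⟩
  obtain ⟨q, s, hmqs, hsk⟩ : ∃ q s, m = k * q + s ∧ s < k :=
    ⟨m / k, m % k, (Nat.div_add_mod m k).symm, Nat.mod_lt _ hk0⟩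
  obtain ⟨q', s', hrqs, hs'k⟩ : ∃ q' s', r = k * q' + s' ∧ s' < k :=
    ⟨r / k, r % k, (Nat.div_add_mod r k).symm, Nat.mod_lt _ hk0⟩
  set lA := fun j => ((range m).filter (fun x => x % k = j)).card with hlA
  set lB := fun j => ((Ico m n).filter (fun x => x % k = j)).card with hlB
  have hA : ∀ j ∈ range k, q ≤ lA j ∧ lA j ≤ q + 1 := by
    intro j hj
    have h0 : range m = Ico 0 (0 + m) := by rw [Nat.zero_add, range_eq_Ico]
    rw [hlA]
    simp only
    rw [h0]
    exact mod_count_Ico_bounds 0 m k j q s hk0 (mem_range.mp hj) hmqs hsk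
  have hB : ∀ j ∈ range k, q' ≤ lB j ∧ lB j ≤ q' + 1 := by
    intro j hj
    have h0 : Ico m n = Ico m (m + r) := by rw [← hnr]
    rw [hlB]
    simp only
    rw [h0]
    exact mod_count_Ico_bounds m r k j q' s' hk0 (mem_range.mp hj) hrqs hs'k
  have hAsum : ∑ j ∈ range k, lA j = m := by
    have h := sum_filter_mod_card (range m) k hk0
    rwa [card_range] at h
  have hBsum : ∑ j ∈ range k, lB j = r := by
    have h := sum_filter_mod_card (Ico m n) k hk0
    have h2 : (Ico m n).card = r := by rw [Nat.card_Ico]; omega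
    rwa [h2] at h
  have hsplit : (((range m) ×ˢ (Ico m n)).filter (fun p : ℕ×ℕ => p.1 % k ≠ p.2 % k)).card
      + (((range m) ×ˢ (Ico m n)).filter (fun p : ℕ×ℕ => p.1 % k = p.2 % k)).card
      = m * r := by
    rw [add_comm]
    have h1 := card_filter_add_card_filter_not
      (s := (range m) ×ˢ (Ico m n)) (p := fun p : ℕ×ℕ => p.1 % k = p.2 % k)
    rw [card_product, card_range, Nat.card_Ico] at h1
    have h2 : n - m = r := by omega
    rw [h2] at h1
    simpa using h1
  have hPeq : (((range m) ×ˢ (Ico m n)).filter (fun p : ℕ×ℕ => p.1 % k = p.2 % k)).card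
      = ∑ j ∈ range k, lA j * lB j := peq_card_eq_sum m n k hk0
  set S := ∑ j ∈ range k, lA j * lB j with hS
  have hSmr : S ≤ m * r := by omega
  have hcrossN : (((range m) ×ˢ (Ico m n)).filter (fun p : ℕ×ℕ => p.1 % k ≠ p.2 % k)).card
      = m * r - S := by omega
  rw [hcrossN]
  have hSreal : (S:ℝ) = ∑ j ∈ range k, (lA j : ℝ) * (lB j : ℝ) := by
    rw [hS]; push_cast; rfl
  have hAsumR : ∑ j ∈ range k, (lA j : ℝ) = (m:ℝ) := by exact_mod_cast hAsum
  have hBsumR : ∑ j ∈ range k, (lB j : ℝ) = (r:ℝ) := by exact_mod_cast hBsum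
  have hS1 : (q':ℝ) * m + (q:ℝ) * r - (k:ℝ) * q * q' ≤ (S:ℝ) := by
    rw [hSreal]
    have h := sum_mul_ge k (q:ℝ) (q':ℝ) lA lB (fun j hj => by
      have h1 : (q:ℝ) ≤ lA j := by exact_mod_cast (hA j hj).1
      have h2 : (q':ℝ) ≤ lB j := by exact_mod_cast (hB j hj).1
      nlinarith)
    rw [hAsumR, hBsumR] at h
    nlinarith [h]
  have hS2 : ((q':ℝ) + 1) * m + ((q:ℝ) + 1) * r - (k:ℝ) * ((q:ℝ) + 1) * ((q':ℝ) + 1) ≤ (S:ℝ) := by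
    rw [hSreal]
    have h := sum_mul_ge k ((q:ℝ) + 1) ((q':ℝ) + 1) lA lB (fun j hj => by
      have h3 : (lA j : ℝ) ≤ (q:ℝ) + 1 := by exact_mod_cast (hA j hj).2
      have h4 : (lB j : ℝ) ≤ (q':ℝ) + 1 := by exact_mod_cast (hB j hj).2
      nlinarith)
    rw [hAsumR, hBsumR] at h
    nlinarith [h]
  have hcast : ((m * r - S : ℕ) : ℝ) = (m:ℝ) * r - (S:ℝ) := by
    push_cast [Nat.cast_sub hSmr]
    ring
  rw [hcast]
  exact real_final n k m r q s q' s' (S:ℝ) hk hnr hmqs hsk hrqs hs'k hS1 hS2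

end Aux

section Graph

lemma cutAt_le_crossing (n k : ℕ) (hn : 0 < n) (i : Fin (Fintype.card (Fin n))) :
    (turanMod n k).cutAt (finCongr (Fintype.card_fin n).symm) i
      ≤ ((((range ((i:ℕ)+1)) ×ˢ (Ico ((i:ℕ)+1) n)).filter
          (fun p : ℕ×ℕ => p.1 % k ≠ p.2 % k)).card) := by
  classical
  unfold SimpleGraph.cutAt
  apply Finset.card_le_card_of_surjOn
    (fun p : ℕ × ℕ => s((⟨p.1 % n, Nat.mod_lt _ hn⟩ : Fin n), (⟨p.2 % n, Nat.mod_lt _ hn⟩ : Fin n)))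
  rintro e he
  simp only [Finset.coe_filter, Set.mem_setOf_eq, SimpleGraph.mem_edgeFinset] at he
  obtain ⟨heE, u, hu, v, hv, hui, hiv⟩ := he
  have huv : u ≠ v := by
    intro h
    subst h
    exact absurd (lt_of_le_of_lt hui hiv) (lt_irrefl _)
  have he2 : e = s(u, v) := ((Sym2.mem_and_mem_iff huv).mp ⟨hu, hv⟩)
  rw [he2, SimpleGraph.mem_edgeSet] at heE
  have hu1 : (u:ℕ) ≤ (i:ℕ) := by simpa [Fin.le_def] using hui
  have hv1 : (i:ℕ) < (v:ℕ) := by simpa [Fin.lt_def] using hiv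
  refine ⟨((u:ℕ), (v:ℕ)), ?_, ?_⟩
  · simp only [Finset.coe_filter, Set.mem_setOf_eq, mem_product, mem_range, mem_Ico]
    exact ⟨⟨by omega, by omega, v.isLt⟩, heE⟩
  · show s((⟨(u:ℕ) % n, _⟩ : Fin n), (⟨(v:ℕ) % n, _⟩ : Fin n)) = e
    have h1 : (⟨(u:ℕ) % n, Nat.mod_lt _ hn⟩ : Fin n) = u :=
      Fin.ext (Nat.mod_eq_of_lt u.isLt)
    have h2 : (⟨(v:ℕ) % n, Nat.mod_lt _ hn⟩ : Fin n) = v :=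
      Fin.ext (Nat.mod_eq_of_lt v.isLt)
    rw [he2, h1, h2]

end Graph

/-- **Upper bound for the Turán-type graph.**
`cw(T(n,k)) ≤ ((k−1)/k) n²/4 + n/2 + k/(4(k−1))`. -/
theorem turanMod_cutwidth_le (n k : ℕ) (hn : 1 ≤ n) (hk : 2 ≤ k) :
    ((turanMod n k).cutwidth : ℝ) ≤
      ((k : ℝ) - 1) / (k : ℝ) * (n : ℝ) ^ 2 / 4 + (n : ℝ) / 2
        + (k : ℝ) / (4 * ((k : ℝ) - 1)) := by
  classical
  have hcard : Fintype.card (Fin n) = n := Fintype.card_fin n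
  set G := turanMod n k with hG
  set f : Fin n ≃ Fin (Fintype.card (Fin n)) := finCongr hcard.symm with hf
  have h1 : G.cutwidth ≤ Finset.univ.sup (fun i => G.cutAt f i) := by
    unfold SimpleGraph.cutwidth
    exact Nat.sInf_le ⟨f, rfl⟩
  have i0 : Fin (Fintype.card (Fin n)) := ⟨0, by rw [hcard]; omega⟩
  obtain ⟨i, -, hi⟩ := Finset.exists_mem_eq_sup
    (univ : Finset (Fin (Fintype.card (Fin n)))) ⟨i0, mem_univ i0⟩
    (fun i => G.cutAt f i)
  have key : (G.cutAt f i : ℝ) ≤ ((k:ℝ) - 1) / (k:ℝ) * (n:ℝ) ^ 2 / 4 + (n:ℝ) / 2 := by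
    have h2 := cutAt_le_crossing n k (by omega) i
    have h3 := crossing_bound n k ((i:ℕ)+1) hk (by have h5 := i.isLt; omega)
    calc (G.cutAt f i : ℝ)
        ≤ ((((range ((i:ℕ)+1)) ×ˢ (Ico ((i:ℕ)+1) n)).filter
            (fun p : ℕ×ℕ => p.1 % k ≠ p.2 % k)).card : ℝ) := by exact_mod_cast h2
      _ ≤ _ := h3
  have hlast : (0:ℝ) ≤ (k:ℝ) / (4 * ((k:ℝ) - 1)) := by
    have hk2 : (2:ℝ) ≤ (k:ℝ) := by exact_mod_cast hk
    apply div_nonneg (by linarith)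
    linarith
  calc (G.cutwidth : ℝ)
      ≤ ((Finset.univ.sup (fun i => G.cutAt f i) : ℕ) : ℝ) := by exact_mod_cast h1
    _ = (G.cutAt f i : ℝ) := by rw [hi]
    _ ≤ ((k:ℝ) - 1) / (k:ℝ) * (n:ℝ) ^ 2 / 4 + (n:ℝ) / 2 := key
    _ ≤ _ := by linarith
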